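/- Let H = (V,E) be a hypergraph and let x be a fractional matching on H. Then there exists a finitely supported probability distribution over matchings of H, i.e., matchings M_1, …, M_q together with coefficients λ_1, …, λ_q ≥ 0 with λ_1 + ⋯ + λ_q = 1, such that for every edge e ∈ E one has Σ_{i : e ∈ M_i} λ_i ≥ x(e) / (|e| − (|e|−1)·x(e)). -/

import Mathlib

open Finset

noncomputable def Dd {α : Type*} (x : Finset α → ℝ) (e : Finset α) : ℝ :=
  (e.card : ℝ) - ((e.card : ℝ) - 1) * x e

lemma one_le_Dd {α : Type*} (x : Finset α → ℝ) (e : Finset α) (he : e.Nonempty)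
    (h0 : 0 ≤ x e) (h1 : x e ≤ 1) : 1 ≤ Dd x e := by
  have hc : (1 : ℝ) ≤ e.card := by exact_mod_cast Finset.card_pos.mpr he
  unfold Dd; nlinarith

section
variable {α : Type*} [DecidableEq α] (V : Finset α) (E : Finset (Finset α))

/-- counting lemma: edges of `F ⊆ E` meeting `f` have total `x`-weight at most `Dd x f`. -/
lemma counting (hE : ∀ e ∈ E, e.Nonempty ∧ e ⊆ V) (x : Finset α → ℝ)
    (hx01 : ∀ e ∈ E, 0 ≤ x e ∧ x e ≤ 1)
    (hxfrac : ∀ v ∈ V, ∑ e ∈ E.filter (fun e => v ∈ e), x e ≤ 1)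
    (F : Finset (Finset α)) (hFE : F ⊆ E) (f : Finset α) (hf : f ∈ E) :
    ∑ e ∈ F.filter (fun e => ¬ Disjoint e f), x e ≤ Dd x f := by
  classical
  set S : Finset (Finset α) := (F.filter (fun e => ¬ Disjoint e f)).erase f with hS
  have hSE : ∀ e ∈ S, e ∈ E := fun e he => hFE (Finset.mem_of_mem_filter e (Finset.mem_of_mem_erase he))
  -- step 1: ∑_{e∈S} x e ≤ ∑_{v∈f} ∑_{e∈S, v∈e} x e
  have step1 : ∑ e ∈ S, x e ≤ ∑ v ∈ f, ∑ e ∈ S.filter (fun e => v ∈ e), x e := by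
    have : ∀ v ∈ f, ∑ e ∈ S.filter (fun e => v ∈ e), x e
        = ∑ e ∈ S, (if v ∈ e then x e else 0) := fun v _ => Finset.sum_filter _ _
    rw [Finset.sum_congr rfl this, Finset.sum_comm]
    apply Finset.sum_le_sum
    intro e heS
    have hne : ¬ Disjoint e f := (Finset.mem_filter.mp (Finset.mem_of_mem_erase heS)).2
    obtain ⟨v, hve, hvf⟩ := Finset.not_disjoint_iff.mp hne
    have hxe : 0 ≤ x e := (hx01 e (hSE e heS)).1
    calc x e = ∑ v' ∈ {v}, (if v' ∈ e then x e else 0) := by simp [hve]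
      _ ≤ ∑ v' ∈ f, (if v' ∈ e then x e else 0) := by
          apply Finset.sum_le_sum_of_subset_of_nonneg (Finset.singleton_subset_iff.mpr hvf)
          intro i _ _; positivity
  -- step 2: for v ∈ f, ∑_{e∈S, v∈e} x e ≤ 1 - x f
  have step2 : ∀ v ∈ f, ∑ e ∈ S.filter (fun e => v ∈ e), x e ≤ 1 - x f := by
    intro v hv
    have hvV : v ∈ V := (hE f hf).2 hv
    have hsub : insert f (S.filter (fun e => v ∈ e)) ⊆ E.filter (fun e => v ∈ e) := by
      intro e he
      rcases Finset.mem_insert.mp he with rfl | he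
      · exact Finset.mem_filter.mpr ⟨hf, hv⟩
      · have := Finset.mem_filter.mp he
        exact Finset.mem_filter.mpr ⟨hSE e this.1, this.2⟩
    have hfn : f ∉ S.filter (fun e => v ∈ e) := fun h =>
      (Finset.notMem_erase f _) (Finset.mem_of_mem_filter f h)
    have := Finset.sum_le_sum_of_subset_of_nonneg hsub (fun e heE _ => (hx01 e (Finset.mem_of_mem_filter e heE)).1)
    rw [Finset.sum_insert hfn] at this
    have := this.trans (hxfrac v hvV)
    linarith
  have hcard : (0:ℝ) ≤ ((f.card : ℝ) - 1) := by
    have : (1:ℝ) ≤ f.card := by exact_mod_cast Finset.card_pos.mpr (hE f hf).1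
    linarith
  have hxf1 : x f ≤ 1 := (hx01 f hf).2
  have step3 : ∑ v ∈ f, ∑ e ∈ S.filter (fun e => v ∈ e), x e ≤ (f.card : ℝ) * (1 - x f) := by
    calc ∑ v ∈ f, ∑ e ∈ S.filter (fun e => v ∈ e), x e
        ≤ ∑ _v ∈ f, (1 - x f) := Finset.sum_le_sum step2
      _ = (f.card : ℝ) * (1 - x f) := by rw [Finset.sum_const, nsmul_eq_mul]
  have hSsum : ∑ e ∈ S, x e ≤ (f.card : ℝ) * (1 - x f) := step1.trans step3
  by_cases hfF : f ∈ F.filter (fun e => ¬ Disjoint e f)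
  · rw [← Finset.insert_erase hfF, Finset.sum_insert (Finset.notMem_erase f _)]
    unfold Dd; rw [← hS] at *; nlinarith
  · have : (F.filter (fun e => ¬ Disjoint e f)).erase f = F.filter (fun e => ¬ Disjoint e f) :=
      Finset.erase_eq_of_notMem hfF
    rw [← this]
    have hxf0 : 0 ≤ x f := (hx01 f hf).1
    unfold Dd; rw [← hS] at *; nlinarith

/-- Key greedy lemma: for any nonnegative weights, some matching collects at least
the `w`-weighted sum of `y e = x e / Dd x e`. -/
lemma key_greedy (hE : ∀ e ∈ E, e.Nonempty ∧ e ⊆ V) (x : Finset α → ℝ)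
    (hx01 : ∀ e ∈ E, 0 ≤ x e ∧ x e ≤ 1)
    (hxfrac : ∀ v ∈ V, ∑ e ∈ E.filter (fun e => v ∈ e), x e ≤ 1)
    (w : Finset α → ℝ) (hw : ∀ e, 0 ≤ w e) :
    ∀ F : Finset (Finset α), F ⊆ E →
      ∃ M ⊆ F, (∀ e₁ ∈ M, ∀ e₂ ∈ M, e₁ ≠ e₂ → Disjoint e₁ e₂) ∧
        ∑ e ∈ F, w e * (x e / Dd x e) ≤ ∑ e ∈ M, w e := by
  classical
  intro F
  induction F using Finset.strongInduction with
  | _ F ih =>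
  intro hFE
  rcases F.eq_empty_or_nonempty with rfl | hFne
  · exact ⟨∅, Finset.Subset.refl _, by simp, by simp⟩
  obtain ⟨f, hfF, hfmax⟩ := F.exists_max_image (fun e => w e / Dd x e) hFne
  have hfE : f ∈ E := hFE hfF
  have hDpos : ∀ e ∈ E, (0:ℝ) < Dd x e := fun e he =>
    lt_of_lt_of_le one_pos (one_le_Dd x e (hE e he).1 (hx01 e he).1 (hx01 e he).2)
  set F' : Finset (Finset α) := F.filter (fun e => Disjoint e f) with hF'
  have hfF' : f ∉ F' := by
    intro h
    have hdisj := (Finset.mem_filter.mp h).2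
    obtain ⟨a, ha⟩ := (hE f hfE).1
    exact Finset.disjoint_left.mp hdisj ha ha
  have hssub : F' ⊂ F := Finset.ssubset_iff_of_subset (Finset.filter_subset _ _) |>.mpr ⟨f, hfF, hfF'⟩
  obtain ⟨M', hM'F', hM'match, hM'sum⟩ := ih F' hssub ((Finset.filter_subset _ _).trans hFE)
  refine ⟨insert f M', ?_, ?_, ?_⟩
  · intro e he
    rcases Finset.mem_insert.mp he with rfl | he
    · exact hfF
    · exact Finset.filter_subset _ _ (hM'F' he)
  · intro e₁ h₁ e₂ h₂ hne
    have hd : ∀ e ∈ M', Disjoint e f := fun e he => (Finset.mem_filter.mp (hM'F' he)).2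
    rw [Finset.mem_insert] at h₁ h₂
    rcases h₁ with rfl | h₁
    · rcases h₂ with rfl | h₂
      · exact absurd rfl hne
      · exact (hd e₂ h₂).symm
    · rcases h₂ with rfl | h₂
      · exact hd e₁ h₁
      · exact hM'match e₁ h₁ e₂ h₂ hne
  · -- the numeric estimate
    have hfM' : f ∉ M' := fun h => hfF' (hM'F' h)
    rw [Finset.sum_insert hfM']
    -- split F into F' and the rest
    have hsplit : ∑ e ∈ F, w e * (x e / Dd x e)
        = ∑ e ∈ F', w e * (x e / Dd x e)
          + ∑ e ∈ F.filter (fun e => ¬ Disjoint e f), w e * (x e / Dd x e) := by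
      rw [hF', Finset.sum_filter_add_sum_filter_not]
    rw [hsplit]
    have hmain : ∑ e ∈ F.filter (fun e => ¬ Disjoint e f), w e * (x e / Dd x e) ≤ w f := by
      have hbound : ∀ e ∈ F.filter (fun e => ¬ Disjoint e f),
          w e * (x e / Dd x e) ≤ (w f / Dd x f) * x e := by
        intro e he
        have heF : e ∈ F := Finset.mem_of_mem_filter e he
        have heE : e ∈ E := hFE heF
        have h1 := hfmax e heF
        have hDe := hDpos e heE
        have hDf := hDpos f hfE
        have hxe : 0 ≤ x e := (hx01 e heE).1
        rw [div_le_div_iff₀ hDe hDf] at h1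
        have : w e * (x e / Dd x e) = (w e / Dd x e) * x e := by ring
        rw [this]
        apply mul_le_mul_of_nonneg_right _ hxe
        rw [div_le_div_iff₀ hDe hDf]
        linarith
      calc ∑ e ∈ F.filter (fun e => ¬ Disjoint e f), w e * (x e / Dd x e)
          ≤ ∑ e ∈ F.filter (fun e => ¬ Disjoint e f), (w f / Dd x f) * x e :=
            Finset.sum_le_sum hbound
        _ = (w f / Dd x f) * ∑ e ∈ F.filter (fun e => ¬ Disjoint e f), x e := by
            rw [Finset.mul_sum]
        _ ≤ (w f / Dd x f) * Dd x f := by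
            apply mul_le_mul_of_nonneg_left (counting V E hE x hx01 hxfrac F hFE f hfE)
            exact div_nonneg (hw f) (le_of_lt (hDpos f hfE))
        _ = w f := div_mul_cancel₀ (w f) (ne_of_gt (hDpos f hfE))
    linarith
end

/-- For any hypergraph `H = (V, E)` and fractional matching `x`,
there exists a finitely supported probability distribution over matchings of `H`
such that every edge `e ∈ E` has marginal at least `x e / (|e| - (|e| - 1) * x e)`. -/
theorem exists_distribution_over_matchings
    {α : Type*} [DecidableEq α] (V : Finset α) (E : Finset (Finset α))
    (hE : ∀ e ∈ E, e.Nonempty ∧ e ⊆ V)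
    (x : Finset α → ℝ)
    (hx01 : ∀ e ∈ E, 0 ≤ x e ∧ x e ≤ 1)
    (hxfrac : ∀ v ∈ V, ∑ e ∈ E.filter (fun e => v ∈ e), x e ≤ 1) :
    ∃ (q : ℕ) (M : Fin q → Finset (Finset α)) (lam : Fin q → ℝ),
      (∀ i, M i ⊆ E) ∧
      (∀ i, ∀ e₁ ∈ M i, ∀ e₂ ∈ M i, e₁ ≠ e₂ → Disjoint e₁ e₂) ∧
      (∀ i, 0 ≤ lam i) ∧ (∑ i, lam i = 1) ∧
      (∀ e ∈ E,
        x e / ((e.card : ℝ) - ((e.card : ℝ) - 1) * x e)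
          ≤ ∑ i, if e ∈ M i then lam i else 0) := by
  classical
  set y : Finset α → ℝ := fun e => x e / Dd x e with hy
  set 𝓜 : Finset (Finset (Finset α)) :=
    E.powerset.filter (fun M => ∀ e₁ ∈ M, ∀ e₂ ∈ M, e₁ ≠ e₂ → Disjoint e₁ e₂) with h𝓜
  set chi : Finset (Finset α) → ({e // e ∈ E} → ℝ) :=
    fun M i => if (i : Finset α) ∈ M then 1 else 0 with hchi
  set T : Finset ({e // e ∈ E} → ℝ) := 𝓜.image chi with hT
  set yv : {e // e ∈ E} → ℝ := fun i => y (i : Finset α) with hyv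
  -- main claim: some point of the convex hull of matching indicators dominates yv
  have hclaim : ∃ c ∈ convexHull ℝ (T : Set ({e // e ∈ E} → ℝ)), ∀ i, yv i ≤ c i := by
    by_contra hcon
    push_neg at hcon
    set Q : Set ({e // e ∈ E} → ℝ) := Set.univ.pi (fun i => Set.Ici (yv i)) with hQ
    have hmemQ : ∀ z : {e // e ∈ E} → ℝ, z ∈ Q ↔ ∀ i, yv i ≤ z i := by
      intro z
      rw [hQ, Set.mem_univ_pi]
      simp only [Set.mem_Ici]
    have hQconv : Convex ℝ Q := convex_pi (fun i _ => convex_Ici _)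
    have hQclosed : IsClosed Q := isClosed_set_pi (fun i _ => isClosed_Ici)
    have hdisj : Disjoint (convexHull ℝ (T : Set ({e // e ∈ E} → ℝ))) Q := by
      rw [Set.disjoint_left]
      intro c hcC hcQ
      obtain ⟨i, hi⟩ := hcon c hcC
      exact absurd ((hmemQ c).mp hcQ i) (not_le.mpr hi)
    obtain ⟨f, u, v, hfu, huv, hfv⟩ := geometric_hahn_banach_compact_closed
      (convex_convexHull ℝ _) (T.finite_toSet.isCompact_convexHull ℝ) hQconv hQclosed hdisj
    set wι : {e // e ∈ E} → ℝ := fun i => f (fun j => if i = j then 1 else 0) with hwι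
    have hfrep : ∀ z, f z = ∑ i, z i * wι i := by
      intro z
      have := LinearMap.pi_apply_eq_sum_univ (f : ({e // e ∈ E} → ℝ) →ₗ[ℝ] ℝ) z
      simpa [smul_eq_mul] using this
    have hyvQ : yv ∈ Q := (hmemQ yv).mpr (fun i => le_refl _)
    have hvy : v < f yv := hfv yv hyvQ
    have hw0 : ∀ i, 0 ≤ wι i := by
      intro i
      by_contra hneg
      push_neg at hneg
      have hne : wι i ≠ 0 := ne_of_lt hneg
      set t₀ : ℝ := (v - f yv) / wι i + 1 with ht₀
      have ht₀pos : 0 ≤ t₀ := by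
        have h1 := div_pos (show 0 < f yv - v by linarith) (show 0 < -(wι i) by linarith)
        have h2 : (v - f yv) / wι i = (f yv - v) / (-(wι i)) := by
          rw [div_neg, ← neg_div, neg_sub]
        rw [ht₀, h2]
        linarith
      set gi : {e // e ∈ E} → ℝ := fun j => if i = j then 1 else 0 with hgi
      set z : {e // e ∈ E} → ℝ := yv + t₀ • gi with hz
      have hzQ : z ∈ Q := by
        rw [hmemQ]
        intro j
        simp only [hz, Pi.add_apply, Pi.smul_apply, smul_eq_mul, hgi]
        by_cases hij : i = j <;> simp [hij] <;> nlinarith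
      have hfz : f z = f yv + t₀ * wι i := by
        rw [hz, map_add, map_smul]
        simp [hwι, hgi, smul_eq_mul]
      have ht₀w : t₀ * wι i = (v - f yv) + wι i := by
        rw [ht₀]
        field_simp
      have := hfv z hzQ
      rw [hfz, ht₀w] at this
      linarith
    set w : Finset α → ℝ := fun e => if h : e ∈ E then wι ⟨e, h⟩ else 0 with hw
    have hwnn : ∀ e, 0 ≤ w e := by
      intro e
      by_cases h : e ∈ E <;> simp [hw, h]
      exact hw0 _
    obtain ⟨M, hME, hMmatch, hMsum⟩ :=
      key_greedy V E hE x hx01 hxfrac w hwnn E (Finset.Subset.refl E)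
    have hMT : chi M ∈ T := by
      rw [hT]
      exact Finset.mem_image_of_mem chi
        (Finset.mem_filter.mpr ⟨Finset.mem_powerset.mpr hME, hMmatch⟩)
    have hchiC : chi M ∈ convexHull ℝ (T : Set ({e // e ∈ E} → ℝ)) :=
      subset_convexHull ℝ _ (by exact_mod_cast hMT)
    have h1 : f (chi M) < u := hfu _ hchiC
    -- f yv = ∑_{e∈E} w e * y e
    have h2 : f yv = ∑ e ∈ E, w e * y e := by
      rw [hfrep]
      rw [← Finset.sum_coe_sort E (fun e => w e * y e)]
      apply Finset.sum_congr rfl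
      intro i _
      simp [hw, hyv, i.2, mul_comm]
    -- f (chi M) = ∑_{e∈M} w e
    have h3 : f (chi M) = ∑ e ∈ M, w e := by
      rw [hfrep]
      have : ∀ i : {e // e ∈ E}, chi M i * wι i = (if (i : Finset α) ∈ M then w (i : Finset α) else 0) := by
        intro i
        by_cases h : (i : Finset α) ∈ M <;> simp [hchi, h, hw, i.2]
      rw [Finset.sum_congr rfl (fun i _ => this i)]
      rw [Finset.sum_coe_sort E (fun e => if e ∈ M then w e else 0)]
      rw [Finset.sum_ite_mem, Finset.inter_eq_right.mpr hME]
    have h4 : ∑ e ∈ E, w e * y e ≤ ∑ e ∈ M, w e := hMsum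
    rw [← h2, ← h3] at h4
    linarith
  -- unpack the convex combination
  obtain ⟨c, hcC, hdom⟩ := hclaim
  rw [Finset.mem_convexHull'] at hcC
  obtain ⟨lw, hlw0, hlw1, hlwc⟩ := hcC
  have hpre : ∀ z ∈ T, ∃ M ∈ 𝓜, chi M = z := by
    intro z hz
    rw [hT] at hz
    exact Finset.mem_image.mp hz
  choose g hg𝓜 hgchi using hpre
  refine ⟨T.card, fun i => g (T.equivFin.symm i) (T.equivFin.symm i).2,
    fun i => lw (T.equivFin.symm i), ?_, ?_, ?_, ?_, ?_⟩
  · intro i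
    exact Finset.mem_powerset.mp (Finset.mem_filter.mp (hg𝓜 _ _)).1
  · intro i
    exact (Finset.mem_filter.mp (hg𝓜 _ _)).2
  · intro i
    exact hlw0 _ (T.equivFin.symm i).2
  · rw [Equiv.sum_comp T.equivFin.symm (fun z : T => lw z)]
    rw [Finset.sum_coe_sort T lw]
    exact hlw1
  · intro e he
    have key : ∑ i, (if e ∈ g (T.equivFin.symm i) (T.equivFin.symm i).2 then lw ((T.equivFin.symm i) : _) else 0)
        = ∑ z ∈ T, lw z * z ⟨e, he⟩ := by
      rw [Equiv.sum_comp T.equivFin.symm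
        (fun z : T => if e ∈ g z z.2 then lw (z : _) else 0)]
      rw [← Finset.sum_coe_sort T (fun z => lw z * z ⟨e, he⟩)]
      apply Finset.sum_congr rfl
      intro z _
      have := hgchi z z.2
      have hz : (z : {e // e ∈ E} → ℝ) ⟨e, he⟩ = if e ∈ g z z.2 then 1 else 0 := by
        conv_lhs => rw [← this]
      by_cases h : e ∈ g z z.2 <;> simp [h, hz]
    rw [key]
    have hcoord : ∑ z ∈ T, lw z * z ⟨e, he⟩ = c ⟨e, he⟩ := by
      rw [← hlwc]
      rw [Finset.sum_apply]
      apply Finset.sum_congr rfl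
      intro z _
      simp
    rw [hcoord]
    have := hdom ⟨e, he⟩
    simpa [hyv, hy, Dd] using this
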